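/- For real λ ≥ 1 and a > -1, if Y has the exponential power density f(y) = exp(-|y|^λ/λ) / (2 λ^{1/λ} Γ(1+1/λ)) on ℝ, then E(|Y|^a ln|Y|) = λ^{a/λ - 2} Γ((a+1)/λ) [ln λ + ψ((a+1)/λ)] / Γ(1+1/λ), where ψ is the digamma function. -/

import Mathlib

open Real MeasureTheory
open Set

/-- The exponential power density `EPD_λ(0,1)`. -/
noncomputable def epdDensity (lam y : ℝ) : ℝ :=
  Real.exp (-(|y| ^ lam) / lam) / (2 * lam ^ (1 / lam) * Real.Gamma (1 + 1 / lam))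

/-- The digamma function `ψ = (log ∘ Γ)'`. -/
noncomputable def digamma (x : ℝ) : ℝ := deriv (fun t => Real.log (Real.Gamma t)) x



lemma hasDerivAt_realGamma {s : ℝ} (hs : 0 < s) :
    HasDerivAt Real.Gamma (∫ t in Ioi (0:ℝ), t ^ (s - 1) * (Real.log t * Real.exp (-t))) s := by
  have hre : 0 < (s : ℂ).re := by simpa using hs
  have h1 := Complex.hasDerivAt_GammaIntegral hre
  have hopen : IsOpen {z : ℂ | 0 < z.re} := isOpen_lt continuous_const Complex.continuous_re
  have h2 : HasDerivAt Complex.Gamma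
      (∫ t : ℝ in Ioi 0, (t : ℂ) ^ ((s : ℂ) - 1) * (Real.log t * Real.exp (-t))) (s : ℂ) := by
    refine h1.congr_of_eventuallyEq ?_
    filter_upwards [hopen.mem_nhds hre] with z hz
    exact Complex.Gamma_eq_integral hz
  have h3 := h2.real_of_complex
  have hI : (∫ t : ℝ in Ioi 0, (t : ℂ) ^ ((s : ℂ) - 1) * (Real.log t * Real.exp (-t)))
      = ((∫ t : ℝ in Ioi 0, t ^ (s - 1) * (Real.log t * Real.exp (-t)) : ℝ) : ℂ) := by
    refine Eq.trans ?_ (integral_ofReal (𝕜 := ℂ))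
    refine setIntegral_congr_fun measurableSet_Ioi fun t ht => ?_
    show (t : ℂ) ^ ((s : ℂ) - 1) * (Real.log t * Real.exp (-t))
        = ((t ^ (s - 1) * (Real.log t * Real.exp (-t)) : ℝ) : ℂ)
    rw [show ((s : ℂ) - 1) = ((s - 1 : ℝ) : ℂ) by push_cast; ring,
      ← Complex.ofReal_cpow (le_of_lt ht)]
    push_cast
    ring
  rw [hI] at h3
  show HasDerivAt (fun x : ℝ => (Complex.Gamma (x : ℂ)).re) _ s
  simpa [Real.Gamma] using h3


lemma integrableOn_rpow_log_exp {s : ℝ} (hs : 0 < s) :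
    IntegrableOn (fun t : ℝ => t ^ (s - 1) * (Real.log t * Real.exp (-t))) (Ioi 0) := by
  have h1 : IntegrableOn (fun t : ℝ => t ^ (s / 2 - 1) * Real.exp (-t)) (Ioi 0) := by
    have := integrableOn_rpow_mul_exp_neg_mul_rpow (s := s / 2 - 1) (p := 1) (b := 1)
      (by linarith) one_pos one_pos
    simpa using this
  have h2 : IntegrableOn (fun t : ℝ => t ^ (3 * s / 2 - 1) * Real.exp (-t)) (Ioi 0) := by
    have := integrableOn_rpow_mul_exp_neg_mul_rpow (s := 3 * s / 2 - 1) (p := 1) (b := 1)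
      (by linarith) one_pos one_pos
    simpa using this
  have hg : IntegrableOn
      (fun t : ℝ => 2 / s * (t ^ (3 * s / 2 - 1) * Real.exp (-t) + t ^ (s / 2 - 1) * Real.exp (-t)))
      (Ioi 0) := ((h2.add h1).const_mul _)
  refine hg.mono' ?_ ?_
  · refine (ContinuousOn.aestronglyMeasurable ?_ measurableSet_Ioi)
    intro t ht
    have h1 : ContinuousAt (fun t : ℝ => t ^ (s - 1)) t :=
      Real.continuousAt_rpow_const t _ (Or.inl (ne_of_gt ht))
    exact (h1.mul ((Real.continuousAt_log (ne_of_gt ht)).mul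
      ((Real.continuous_exp.comp continuous_neg).continuousAt))).continuousWithinAt
  · rw [ae_restrict_iff' measurableSet_Ioi]
    filter_upwards with t ht
    have ht0 : (0:ℝ) < t := ht
    have hrp : (0:ℝ) < t ^ (s - 1) := rpow_pos_of_pos ht0 _
    have hep : (0:ℝ) < Real.exp (-t) := Real.exp_pos _
    have hlog : |Real.log t| ≤ 2 / s * (t ^ (s / 2) + t ^ (-(s / 2))) := by
      have hs2 : (0:ℝ) < s / 2 := by linarith
      have hu : Real.log t ≤ t ^ (s / 2) / (s / 2) :=
        Real.log_le_rpow_div ht0.le hs2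
      have hl : -Real.log t ≤ t ^ (-(s / 2)) / (s / 2) := by
        have := Real.log_le_rpow_div (inv_nonneg.mpr ht0.le) hs2
        rwa [Real.log_inv, Real.inv_rpow ht0.le, ← Real.rpow_neg ht0.le] at this
      have hp1 : (0:ℝ) ≤ t ^ (s / 2) := (rpow_pos_of_pos ht0 _).le
      have hp2 : (0:ℝ) ≤ t ^ (-(s / 2)) := (rpow_pos_of_pos ht0 _).le
      have e1 : t ^ (s / 2) / (s / 2) = 2 / s * t ^ (s / 2) := by
        field_simp
      have e2 : t ^ (-(s / 2)) / (s / 2) = 2 / s * t ^ (-(s / 2)) := by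
        field_simp
      have c1 : 0 ≤ 2 / s * t ^ (s / 2) := by positivity
      have c2 : 0 ≤ 2 / s * t ^ (-(s / 2)) := by positivity
      rw [e1] at hu; rw [e2] at hl
      rw [abs_le]
      constructor <;> nlinarith
    have hsplit1 : t ^ (3 * s / 2 - 1) = t ^ (s - 1) * t ^ (s / 2) := by
      rw [← Real.rpow_add ht0]; ring_nf
    have hsplit2 : t ^ (s / 2 - 1) = t ^ (s - 1) * t ^ (-(s / 2)) := by
      rw [← Real.rpow_add ht0]; ring_nf
    rw [Real.norm_eq_abs, abs_mul, abs_mul, abs_of_pos hrp, abs_of_pos hep, hsplit1, hsplit2]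
    calc t ^ (s - 1) * (|Real.log t| * Real.exp (-t))
        ≤ t ^ (s - 1) * ((2 / s * (t ^ (s / 2) + t ^ (-(s / 2)))) * Real.exp (-t)) := by
          gcongr
      _ = 2 / s * (t ^ (s - 1) * t ^ (s / 2) * Real.exp (-t)
            + t ^ (s - 1) * t ^ (-(s / 2)) * Real.exp (-t)) := by ring

lemma integral_rpow_log_exp {s : ℝ} (hs : 0 < s) :
    ∫ t in Ioi (0:ℝ), t ^ (s - 1) * (Real.log t * Real.exp (-t))
      = Real.Gamma s * digamma s := by
  have hΓ : 0 < Real.Gamma s := Real.Gamma_pos_of_pos hs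
  have h := (hasDerivAt_realGamma hs).log hΓ.ne'
  have hd : digamma s
      = (∫ t in Ioi (0:ℝ), t ^ (s - 1) * (Real.log t * Real.exp (-t))) / Real.Gamma s :=
    h.deriv
  rw [hd]
  field_simp

theorem epd_abs_log_moment (lam a : ℝ) (hlam : 1 ≤ lam) (ha : -1 < a) :
    ∫ y : ℝ, |y| ^ a * Real.log |y| * epdDensity lam y
      = lam ^ (a / lam - 2) * Real.Gamma ((a + 1) / lam)
          * (Real.log lam + digamma ((a + 1) / lam)) / Real.Gamma (1 + 1 / lam) := by
  have hl0 : (0:ℝ) < lam := lt_of_lt_of_le one_pos hlam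
  set s : ℝ := (a + 1) / lam with hs_def
  have hs0 : 0 < s := div_pos (by linarith) hl0
  set C : ℝ := 2 * lam ^ (1 / lam) * Real.Gamma (1 + 1 / lam) with hC_def
  have hC0 : 0 < C := by
    have := Real.Gamma_pos_of_pos (show (0:ℝ) < 1 + 1 / lam by positivity)
    have := Real.rpow_pos_of_pos hl0 (1 / lam)
    positivity
  -- Step 1: reduce to Ioi 0
  have step1 : (∫ y : ℝ, |y| ^ a * Real.log |y| * epdDensity lam y)
      = 2 * ∫ x in Ioi (0:ℝ), x ^ a * Real.log x * epdDensity lam x := by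
    rw [← integral_comp_abs (f := fun x => x ^ a * Real.log x * epdDensity lam x)]
    congr 1
    funext y
    simp only [epdDensity, abs_abs]
  -- Step 2: substitution u = x ^ lam
  set g : ℝ → ℝ := fun u => u ^ (s - 1) * Real.log u * Real.exp (-u / lam) / lam ^ 2 with hg_def
  have step2 : (∫ x in Ioi (0:ℝ), x ^ a * Real.log x * Real.exp (-x ^ lam / lam))
      = ∫ u in Ioi (0:ℝ), g u := by
    rw [← integral_comp_rpow_Ioi g (ne_of_gt hl0)]
    refine setIntegral_congr_fun measurableSet_Ioi fun x hx => ?_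
    have hx0 : (0:ℝ) < x := hx
    have h1 : (x ^ lam) ^ (s - 1) = x ^ (a + 1 - lam) := by
      rw [← Real.rpow_mul hx0.le]
      rw [hs_def]
      field_simp
    have h2 : Real.log (x ^ lam) = lam * Real.log x := Real.log_rpow hx0 lam
    simp only [g, smul_eq_mul, h1, h2, abs_of_pos hl0]
    have h3 : x ^ (lam - 1) * x ^ (a + 1 - lam) = x ^ a := by
      rw [← Real.rpow_add hx0]; ring_nf
    rw [eq_comm, ← h3]
    field_simp
  -- Step 3: scaling u = lam * t and evaluation via Gamma
  have hΓ : 0 < Real.Gamma s := Real.Gamma_pos_of_pos hs0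
  have step3 : (∫ u in Ioi (0:ℝ), u ^ (s - 1) * Real.log u * Real.exp (-u / lam))
      = lam ^ s * (Real.Gamma s * (Real.log lam + digamma s)) := by
    have h := integral_comp_mul_left_Ioi
      (fun u => u ^ (s - 1) * Real.log u * Real.exp (-u / lam)) 0 hl0
    rw [mul_zero] at h
    have h' : (∫ u in Ioi (0:ℝ), u ^ (s - 1) * Real.log u * Real.exp (-u / lam))
        = lam * ∫ x in Ioi (0:ℝ),
            (lam * x) ^ (s - 1) * Real.log (lam * x) * Real.exp (-(lam * x) / lam) := by
      rw [h, smul_eq_mul, ← mul_assoc, mul_inv_cancel₀ hl0.ne', one_mul]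
    have hpt : ∀ x ∈ Ioi (0:ℝ),
        (lam * x) ^ (s - 1) * Real.log (lam * x) * Real.exp (-(lam * x) / lam)
          = lam ^ (s - 1) * (Real.log lam * (x ^ (s - 1) * Real.exp (-x))
              + x ^ (s - 1) * (Real.log x * Real.exp (-x))) := by
      intro x hx
      have hx0 : (0:ℝ) < x := hx
      rw [Real.mul_rpow hl0.le hx0.le, Real.log_mul hl0.ne' hx0.ne',
        show -(lam * x) / lam = -x by field_simp]
      ring
    have hint1 : IntegrableOn (fun x : ℝ => x ^ (s - 1) * Real.exp (-x)) (Ioi 0) :=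
      (Real.GammaIntegral_convergent hs0).congr_fun (fun x _ => mul_comm _ _) measurableSet_Ioi
    have hG : (∫ x in Ioi (0:ℝ), x ^ (s - 1) * Real.exp (-x)) = Real.Gamma s := by
      rw [Real.Gamma_eq_integral hs0]
      exact setIntegral_congr_fun measurableSet_Ioi fun x _ => mul_comm _ _
    rw [h', setIntegral_congr_fun measurableSet_Ioi hpt, integral_const_mul ..,
      integral_add (hint1.const_mul _) (integrableOn_rpow_log_exp hs0),
      integral_const_mul .., hG, integral_rpow_log_exp hs0]
    rw [show lam ^ s = lam * lam ^ (s - 1) by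
      rw [mul_comm, ← Real.rpow_add_one hl0.ne' (s - 1), sub_add_cancel]]
    ring
  -- Step 4: put everything together
  have hepd : ∀ x ∈ Ioi (0:ℝ), x ^ a * Real.log x * epdDensity lam x
      = x ^ a * Real.log x * Real.exp (-x ^ lam / lam) / C := by
    intro x hx
    rw [epdDensity, abs_of_pos hx, ← hC_def, mul_div_assoc]
  have hgsplit : (∫ u in Ioi (0:ℝ), g u)
      = (∫ u in Ioi (0:ℝ), u ^ (s - 1) * Real.log u * Real.exp (-u / lam)) / lam ^ 2 := by
    simp only [hg_def]
    exact integral_div _ _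
  rw [step1, setIntegral_congr_fun measurableSet_Ioi hepd, integral_div, step2, hgsplit, step3]
  have hkey : lam ^ s / lam ^ (2:ℕ) / lam ^ (1 / lam) = lam ^ (a / lam - 2) := by
    rw [← Real.rpow_natCast lam 2, ← Real.rpow_sub hl0, ← Real.rpow_sub hl0]
    congr 1
    rw [hs_def]
    push_cast
    field_simp
    ring
  have hG1 : 0 < Real.Gamma (1 + 1 / lam) :=
    Real.Gamma_pos_of_pos (by positivity)
  have hP : 0 < lam ^ (1 / lam) := Real.rpow_pos_of_pos hl0 _
  rw [← hkey]
  rw [hC_def]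
  field_simp
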